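/- Every 4-divisible set of exactly 14 points in PG(v-1,2) is the disjoint union of the point sets of two disjoint planes (3-dimensional subspaces intersecting trivially). -/
import Mathlib

open Classical Module

namespace TwoPlanesAux

open Finset Matrix

variable {v : ℕ}

/-- sign character on `ZMod 2` -/
def E (a : ZMod 2) : ℤ := if a = 1 then -1 else 1

lemma E_add : ∀ a b : ZMod 2, E (a + b) = E a * E b := by decide
lemma E_zero : E 0 = 1 := by decide
lemma E_one : E 1 = -1 := by decide
lemma z2ne1 : ∀ a : ZMod 2, ¬ a = 1 → a = 0 := by decide
lemma z2ne0 : ∀ a : ZMod 2, ¬ a = 0 → a = 1 := by decide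
lemma z01 : (0 : ZMod 2) ≠ 1 := by decide
lemma z2add : ∀ a : ZMod 2, a + a = 0 := by decide
lemma z2addeq : ∀ a b : ZMod 2, a + b = 0 → a = b := by decide
lemma z2cases : ∀ a : ZMod 2, a = 0 ∨ a = 1 := by decide

lemma vadd_self (a : Fin v → ZMod 2) : a + a = 0 := by
  funext i; exact z2add (a i)

lemma vzero_iff {a b : Fin v → ZMod 2} : a + b = 0 ↔ a = b := by
  constructor
  · intro h
    funext i
    have hi := congrFun h i
    simp only [Pi.add_apply, Pi.zero_apply] at hi
    exact z2addeq _ _ hi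
  · rintro rfl; exact vadd_self a

lemma vcancel (a b : Fin v → ZMod 2) : a + (a + b) = b := by
  rw [← add_assoc, vadd_self, zero_add]

lemma vcancel' (a b : Fin v → ZMod 2) : a + b + b = a := by
  rw [add_assoc, vadd_self, add_zero]

lemma vaba (a b : Fin v → ZMod 2) : a + b + a = b := by
  rw [add_comm a b, add_assoc, vadd_self, add_zero]

/-- character pairing -/
def eps (x y : Fin v → ZMod 2) : ℤ := E (x ⬝ᵥ y)

lemma eps_mul (x x' y : Fin v → ZMod 2) : eps x y * eps x' y = eps (x + x') y := by
  rw [eps, eps, eps, add_dotProduct, E_add]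

lemma eps_zero (y : Fin v → ZMod 2) : eps 0 y = 1 := by
  rw [eps, zero_dotProduct, E_zero]

lemma card_univ_V : Fintype.card (Fin v → ZMod 2) = 2 ^ v := by
  rw [Fintype.card_fun, ZMod.card, Fintype.card_fin]

lemma sum_eps (u : Fin v → ZMod 2) :
    ∑ y : Fin v → ZMod 2, eps u y = if u = 0 then (2 ^ v : ℤ) else 0 := by
  by_cases hu : u = 0
  · rw [if_pos hu, hu]
    simp only [eps_zero]
    rw [Finset.sum_const, Finset.card_univ, card_univ_V, nsmul_eq_mul, mul_one]
    push_cast; ring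
  · rw [if_neg hu]
    obtain ⟨i, hi⟩ := Function.ne_iff.mp hu
    have hi1 : u i = 1 := z2ne0 _ (by simpa using hi)
    set s : Fin v → ZMod 2 := Pi.single i 1 with hs
    have hus : u ⬝ᵥ s = 1 := by
      rw [hs, dotProduct_single, mul_one, hi1]
    have key : ∑ y : Fin v → ZMod 2, eps u (y + s) = ∑ y : Fin v → ZMod 2, eps u y :=
      Fintype.sum_bijective (fun y => y + s) (Equiv.addRight s).bijective _ _ (fun y => rfl)
    have key2 : ∀ y : Fin v → ZMod 2, eps u (y + s) = - eps u y := by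
      intro y
      have : eps u y * eps u s = eps u (y + s) := by
        rw [eps, eps, eps, dotProduct_add, E_add]
      rw [← this, show eps u s = -1 from by rw [eps, hus, E_one]]; ring
    have := key
    rw [Finset.sum_congr rfl (fun y _ => key2 y), Finset.sum_neg_distrib] at this
    linarith


section Main

variable (S : Finset (Fin v → ZMod 2))

/-- number of points of `S` not on the hyperplane dual to `y` -/
def wt (y : Fin v → ZMod 2) : ℕ := (S.filter fun x => x ⬝ᵥ y = 1).card

/-- character sum over `S` -/
def sig (y : Fin v → ZMod 2) : ℤ := ∑ x ∈ S, eps x y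

lemma sig_eq_wt (y : Fin v → ZMod 2) :
    sig S y = (S.card : ℤ) - 2 * wt S y := by
  have hsplit := Finset.card_filter_add_card_filter_not
    (s := S) (p := fun x => x ⬝ᵥ y = 1)
  have h1 : ∑ x ∈ S.filter (fun x => x ⬝ᵥ y = 1), eps x y
      = - ((wt S y : ℤ)) := by
    rw [wt, Finset.sum_congr rfl (fun x hx => show eps x y = -1 from by
      rw [eps, (Finset.mem_filter.mp hx).2, E_one]), Finset.sum_const, nsmul_eq_mul]
    ring
  have h2 : ∑ x ∈ S.filter (fun x => ¬ x ⬝ᵥ y = 1), eps x y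
      = ((S.filter (fun x => ¬ x ⬝ᵥ y = 1)).card : ℤ) := by
    rw [Finset.sum_congr rfl (fun x hx => show eps x y = 1 from by
      rw [eps, E]; exact if_neg (Finset.mem_filter.mp hx).2), Finset.sum_const,
      nsmul_eq_mul, mul_one]
  have h3 : sig S y = ∑ x ∈ S.filter (fun x => x ⬝ᵥ y = 1), eps x y
      + ∑ x ∈ S.filter (fun x => ¬ x ⬝ᵥ y = 1), eps x y := by
    rw [sig, Finset.sum_filter_add_sum_filter_not]
  have hle : wt S y ≤ S.card := Finset.card_filter_le _ _
  have hcf : (S.filter (fun x => ¬ x ⬝ᵥ y = 1)).card = S.card - wt S y := by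
    rw [wt] at *; omega
  rw [h3, h1, h2, hcf]
  push_cast [Nat.cast_sub hle]
  ring

lemma dot_single_one (x : Fin v → ZMod 2) (i : Fin v) :
    x ⬝ᵥ Pi.single i 1 = x i := by
  rw [dotProduct_single, mul_one]

/-- separating vector for two distinct nonzero points -/
lemma sep (p q : Fin v → ZMod 2) (hp : p ≠ 0) (hpq : p ≠ q) :
    ∃ y, p ⬝ᵥ y = 1 ∧ q ⬝ᵥ y = 0 := by
  by_cases h : ∃ j, p j = 1 ∧ q j = 0
  · obtain ⟨j, hj1, hj2⟩ := h
    exact ⟨Pi.single j 1, by rw [dot_single_one, hj1], by rw [dot_single_one, hj2]⟩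
  · push_neg at h
    obtain ⟨k, hk⟩ := Function.ne_iff.mp hp
    have hpk : p k = 1 := z2ne0 _ (by simpa using hk)
    have hqk : q k = 1 := by
      by_contra hq'
      exact (h k hpk) (z2ne1 _ hq')
    obtain ⟨m, hm⟩ := Function.ne_iff.mp hpq
    have hpm : p m = 0 := by
      by_contra hp'
      have h1 : p m = 1 := z2ne0 _ hp'
      have h2 : q m ≠ 0 := h m h1
      exact hm (h1.trans (z2ne0 _ h2).symm)
    have hqm : q m = 1 := by
      by_contra hq'
      exact hm (hpm.trans (z2ne1 _ hq').symm)
    refine ⟨Pi.single k 1 + Pi.single m 1, ?_, ?_⟩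
    · rw [dotProduct_add, dot_single_one, dot_single_one, hpk, hpm, add_zero]
    · rw [dotProduct_add, dot_single_one, dot_single_one, hqk, hqm]
      exact z2add 1

variable {S} (h0 : ∀ x ∈ S, x ≠ 0) (hc : S.card = 14)
  (hd : ∀ y : Fin v → ZMod 2, y ≠ 0 → 4 ∣ wt S y)

include h0 hc hd in
lemma wt_ne_twelve : ∀ y : Fin v → ZMod 2, y ≠ 0 → wt S y ≠ 12 := by
  intro y hy hw12
  have hb : (S.filter fun x => ¬ x ⬝ᵥ y = 1).card = 2 := by
    have := Finset.card_filter_add_card_filter_not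
      (s := S) (p := fun x => x ⬝ᵥ y = 1)
    rw [wt] at hw12; omega
  obtain ⟨p', q', hpq', hbeq⟩ := Finset.card_eq_two.mp hb
  have hpb : p' ∈ S.filter (fun x => ¬ x ⬝ᵥ y = 1) := by rw [hbeq]; simp
  have hqb : q' ∈ S.filter (fun x => ¬ x ⬝ᵥ y = 1) := by rw [hbeq]; simp
  have hpS : p' ∈ S := (Finset.mem_filter.mp hpb).1
  have hqS : q' ∈ S := (Finset.mem_filter.mp hqb).1
  have hpy : p' ⬝ᵥ y = 0 := z2ne1 _ (Finset.mem_filter.mp hpb).2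
  have hqy : q' ⬝ᵥ y = 0 := z2ne1 _ (Finset.mem_filter.mp hqb).2
  obtain ⟨y', hy1, hy2⟩ := sep p' q' (h0 _ hpS) hpq'
  set a := S.filter (fun x => x ⬝ᵥ y = 1) with ha
  have hacard : a.card = 12 := hw12
  set n := (a.filter fun x => x ⬝ᵥ y' = 1).card with hn
  set m := (a.filter fun x => ¬ x ⬝ᵥ y' = 1).card with hm
  have hnm : n + m = 12 := by
    rw [hn, hm, Finset.card_filter_add_card_filter_not, hacard]
  -- w y' = n + 1
  have hsplit1 : S.filter (fun x => x ⬝ᵥ y' = 1)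
      = (a.filter fun x => x ⬝ᵥ y' = 1) ∪
        ((S.filter fun x => ¬ x ⬝ᵥ y = 1).filter fun x => x ⬝ᵥ y' = 1) := by
    rw [ha, Finset.filter_filter, Finset.filter_filter, ← Finset.filter_or]
    apply Finset.filter_congr
    intro x _
    constructor
    · intro hx; by_cases h' : x ⬝ᵥ y = 1
      · exact Or.inl ⟨h', hx⟩
      · exact Or.inr ⟨h', hx⟩
    · rintro (⟨_, hx⟩ | ⟨_, hx⟩) <;> exact hx
  have hbfilter : (S.filter fun x => ¬ x ⬝ᵥ y = 1).filter (fun x => x ⬝ᵥ y' = 1)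
      = {p'} := by
    rw [hbeq]
    rw [Finset.filter_insert, if_pos hy1, Finset.filter_singleton,
      if_neg (by rw [hy2]; exact z01)]
    rfl
  have hwy' : wt S y' = n + 1 := by
    rw [wt, hsplit1, Finset.card_union_of_disjoint, hbfilter, Finset.card_singleton]
    apply Finset.disjoint_filter_filter
    rw [ha]
    exact Finset.disjoint_filter_filter_not S S _
  -- w (y + y') = m + 1
  have hsplit2 : S.filter (fun x => x ⬝ᵥ (y + y') = 1)
      = (a.filter fun x => ¬ x ⬝ᵥ y' = 1) ∪
        ((S.filter fun x => ¬ x ⬝ᵥ y = 1).filter fun x => x ⬝ᵥ y' = 1) := by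
    rw [ha, Finset.filter_filter, Finset.filter_filter, ← Finset.filter_or]
    apply Finset.filter_congr
    intro x hx
    rw [dotProduct_add]
    constructor
    · intro hxy
      by_cases h' : x ⬝ᵥ y = 1
      · refine Or.inl ⟨h', ?_⟩
        rw [h'] at hxy
        intro h1
        rw [h1] at hxy
        exact z01 (by rw [← hxy]; exact (z2add 1).symm) |>.elim
      · refine Or.inr ⟨h', ?_⟩
        rw [z2ne1 _ h', zero_add] at hxy
        exact hxy
    · rintro (⟨h1, h2⟩ | ⟨h1, h2⟩)
      · rw [h1, z2ne1 _ h2, add_zero]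
      · rw [z2ne1 _ h1, h2, zero_add]
  have hwyy' : wt S (y + y') = m + 1 := by
    rw [wt, hsplit2, Finset.card_union_of_disjoint, hbfilter, Finset.card_singleton]
    apply Finset.disjoint_filter_filter
    rw [ha]
    exact Finset.disjoint_filter_filter_not S S _
  have hy'0 : y' ≠ 0 := by
    intro h'
    rw [h', dotProduct_zero] at hy1
    exact z01 hy1
  have hyy'0 : y + y' ≠ 0 := by
    intro h'
    have : p' ⬝ᵥ (y + y') = 0 := by rw [h', dotProduct_zero]
    rw [dotProduct_add, hpy, hy1, zero_add] at this
    exact z01 this.symm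
  have d1 := hd y' hy'0
  have d2 := hd (y + y') hyy'0
  rw [hwy'] at d1
  rw [hwyy'] at d2
  omega

-- ------------------- moment machinery -------------------

lemma card_filter_prod {α β : Type*} [DecidableEq α] [DecidableEq β]
    (s : Finset α) (t : Finset β) (P : α → β → Prop) [∀ a b, Decidable (P a b)] :
    ((s ×ˢ t).filter fun z => P z.1 z.2).card
      = ∑ x ∈ s, (t.filter fun b => P x b).card := by
  rw [Finset.card_eq_sum_card_fiberwise
    (f := fun z : α × β => z.1) (t := s)
    (fun z hz => (Finset.mem_product.mp (Finset.mem_filter.mp hz).1).1)]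
  refine Finset.sum_congr rfl (fun x hx => ?_)
  apply Finset.card_bij (fun z _ => z.2)
  · intro z hz
    simp only [Finset.mem_filter] at hz ⊢
    obtain ⟨⟨hz1, hz2⟩, hzx⟩ := hz
    refine ⟨(Finset.mem_product.mp hz1).2, ?_⟩
    rw [← hzx]; exact hz2
  · intro z hz z' hz' hzz
    simp only [Finset.mem_filter] at hz hz'
    exact Prod.ext (hz.2.trans hz'.2.symm) hzz
  · intro b hb
    simp only [Finset.mem_filter] at hb
    exact ⟨(x, b), Finset.mem_filter.mpr
      ⟨Finset.mem_filter.mpr ⟨Finset.mem_product.mpr ⟨hx, hb.1⟩, hb.2⟩, rfl⟩, rfl⟩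

variable (S) in
lemma mom_succ (c : Fin v → ZMod 2) (k : ℕ) :
    ∑ y : Fin v → ZMod 2, eps c y * sig S y ^ (k + 1)
      = ∑ x ∈ S, ∑ y : Fin v → ZMod 2, eps (c + x) y * sig S y ^ k := by
  have point : ∀ y : Fin v → ZMod 2, eps c y * sig S y ^ (k + 1)
      = ∑ x ∈ S, eps (c + x) y * sig S y ^ k := by
    intro y
    have h1 : eps c y * sig S y = ∑ x ∈ S, eps (c + x) y := by
      rw [sig, Finset.mul_sum]
      exact Finset.sum_congr rfl (fun x _ => eps_mul c x y)
    calc eps c y * sig S y ^ (k + 1)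
        = (eps c y * sig S y) * sig S y ^ k := by ring
      _ = (∑ x ∈ S, eps (c + x) y) * sig S y ^ k := by rw [h1]
      _ = ∑ x ∈ S, eps (c + x) y * sig S y ^ k := Finset.sum_mul _ _ _
  rw [Finset.sum_congr rfl (fun y _ => point y)]
  exact Finset.sum_comm

variable (S) in
lemma mom0 (c : Fin v → ZMod 2) :
    ∑ y : Fin v → ZMod 2, eps c y * sig S y ^ 0 = if c = 0 then (2 ^ v : ℤ) else 0 := by
  simp only [pow_zero, mul_one]
  exact sum_eps c

variable (S) in
lemma mom1 (c : Fin v → ZMod 2) :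
    ∑ y : Fin v → ZMod 2, eps c y * sig S y ^ 1
      = if c ∈ S then (2 ^ v : ℤ) else 0 := by
  calc ∑ y : Fin v → ZMod 2, eps c y * sig S y ^ 1
      = ∑ x ∈ S, ∑ y : Fin v → ZMod 2, eps (c + x) y * sig S y ^ 0 :=
        mom_succ S c 0
    _ = ∑ x ∈ S, if x = c then (2 ^ v : ℤ) else 0 := by
        refine Finset.sum_congr rfl (fun x _ => ?_)
        rw [mom0 S (c + x)]
        refine if_congr ?_ rfl rfl
        rw [vzero_iff]; exact eq_comm
    _ = if c ∈ S then (2 ^ v : ℤ) else 0 :=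
        Finset.sum_ite_eq' S c (fun _ => (2 ^ v : ℤ))

variable (S) in
lemma mom2 (c : Fin v → ZMod 2) :
    ∑ y : Fin v → ZMod 2, eps c y * sig S y ^ 2
      = 2 ^ v * ((S.filter fun x => c + x ∈ S).card : ℤ) := by
  calc ∑ y : Fin v → ZMod 2, eps c y * sig S y ^ 2
      = ∑ x ∈ S, ∑ y : Fin v → ZMod 2, eps (c + x) y * sig S y ^ 1 :=
        mom_succ S c 1
    _ = ∑ x ∈ S, if c + x ∈ S then (2 ^ v : ℤ) else 0 :=
        Finset.sum_congr rfl (fun x _ => mom1 S (c + x))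
    _ = ∑ _x ∈ S.filter (fun x => c + x ∈ S), (2 ^ v : ℤ) :=
        (Finset.sum_filter _ _).symm
    _ = 2 ^ v * ((S.filter fun x => c + x ∈ S).card : ℤ) := by
        rw [Finset.sum_const, nsmul_eq_mul, mul_comm]

variable (S) in
lemma mom3 (c : Fin v → ZMod 2) :
    ∑ y : Fin v → ZMod 2, eps c y * sig S y ^ 3
      = 2 ^ v * (((S ×ˢ S).filter fun z => c + z.1 + z.2 ∈ S).card : ℤ) := by
  calc ∑ y : Fin v → ZMod 2, eps c y * sig S y ^ 3
      = ∑ x ∈ S, ∑ y : Fin v → ZMod 2, eps (c + x) y * sig S y ^ 2 :=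
        mom_succ S c 2
    _ = ∑ x ∈ S, 2 ^ v * ((S.filter fun x' => c + x + x' ∈ S).card : ℤ) :=
        Finset.sum_congr rfl (fun x _ => mom2 S (c + x))
    _ = 2 ^ v * ∑ x ∈ S, ((S.filter fun x' => c + x + x' ∈ S).card : ℤ) :=
        (Finset.mul_sum _ _ _).symm
    _ = 2 ^ v * (((S ×ˢ S).filter fun z => c + z.1 + z.2 ∈ S).card : ℤ) := by
        rw [card_filter_prod S S (fun a b => c + a + b ∈ S)]
        push_cast
        ring

variable (S) in
lemma sig_pow_eq (k : ℕ) :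
    ∑ y : Fin v → ZMod 2, sig S y ^ k
      = ∑ y : Fin v → ZMod 2, eps 0 y * sig S y ^ k :=
  Finset.sum_congr rfl (fun y _ => by rw [eps_zero, one_mul])

variable (S) in
lemma mom4 :
    ∑ y : Fin v → ZMod 2, sig S y ^ 4
      = 2 ^ v * (((S ×ˢ (S ×ˢ S)).filter
          fun z => z.1 + z.2.1 + z.2.2 ∈ S).card : ℤ) := by
  calc ∑ y : Fin v → ZMod 2, sig S y ^ 4
      = ∑ y : Fin v → ZMod 2, eps 0 y * sig S y ^ 4 := sig_pow_eq S 4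
    _ = ∑ x ∈ S, ∑ y : Fin v → ZMod 2, eps (0 + x) y * sig S y ^ 3 :=
        mom_succ S 0 3
    _ = ∑ x ∈ S, 2 ^ v * (((S ×ˢ S).filter fun z => x + z.1 + z.2 ∈ S).card : ℤ) := by
        refine Finset.sum_congr rfl (fun x _ => ?_)
        rw [zero_add]
        exact mom3 S x
    _ = 2 ^ v * ∑ x ∈ S, (((S ×ˢ S).filter fun z => x + z.1 + z.2 ∈ S).card : ℤ) :=
        (Finset.mul_sum _ _ _).symm
    _ = 2 ^ v * (((S ×ˢ (S ×ˢ S)).filter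
          fun z => z.1 + z.2.1 + z.2.2 ∈ S).card : ℤ) := by
        rw [card_filter_prod S (S ×ˢ S) (fun a b => a + b.1 + b.2 ∈ S)]
        push_cast
        ring

-- ------------------- the four counting values -------------------

include h0 in
lemma h0S : (0 : Fin v → ZMod 2) ∉ S := fun h => (h0 0 h) rfl

lemma wt_zero : wt S 0 = 0 := by
  rw [wt, Finset.filter_false_of_mem, Finset.card_empty]
  intro x _
  rw [dotProduct_zero]
  exact z01

include h0 hc hd in
lemma sig_factor_global (y : Fin v → ZMod 2) :
    (sig S y - 14) * ((sig S y - 6) * (sig S y + 2)) = 0 := by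
  by_cases hy : y = 0
  · subst hy
    rw [sig_eq_wt, wt_zero, hc]
    norm_num
  · have h4 := hd y hy
    have h12 := wt_ne_twelve h0 hc hd y hy
    have hle : wt S y ≤ 14 := by
      rw [← hc]; exact Finset.card_filter_le _ _
    have : wt S y = 0 ∨ wt S y = 4 ∨ wt S y = 8 := by omega
    rcases this with h | h | h <;> rw [sig_eq_wt, hc, h] <;> norm_num

include h0 hc hd in
lemma sig_factor_local (p : Fin v → ZMod 2) (hp : p ∈ S) (y : Fin v → ZMod 2) :
    (1 - eps p y) * ((sig S y - 6) * (sig S y + 2)) = 0 := by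
  by_cases hpy : p ⬝ᵥ y = 1
  · have hy : y ≠ 0 := by
      intro h'
      rw [h', dotProduct_zero] at hpy
      exact z01 hpy
    have h4 := hd y hy
    have h12 := wt_ne_twelve h0 hc hd y hy
    have hle : wt S y ≤ 14 := by
      rw [← hc]; exact Finset.card_filter_le _ _
    have hge : 1 ≤ wt S y := by
      rw [wt]
      exact Finset.card_pos.mpr ⟨p, Finset.mem_filter.mpr ⟨hp, hpy⟩⟩
    have : wt S y = 4 ∨ wt S y = 8 := by omega
    rcases this with h | h <;> rw [sig_eq_wt, hc, h] <;> norm_num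
  · have : eps p y = 1 := by rw [eps, E]; exact if_neg hpy
    rw [this]
    ring

lemma sum_one_V : ∑ _y : Fin v → ZMod 2, (1 : ℤ) = 2 ^ v := by
  rw [Finset.sum_const, Finset.card_univ, card_univ_V, nsmul_eq_mul, mul_one]
  push_cast; ring

include h0 hc in
lemma sum_sig_sq : ∑ y : Fin v → ZMod 2, sig S y ^ 2 = 2 ^ v * 14 := by
  rw [sig_pow_eq S 2, mom2 S 0]
  congr 1
  have : S.filter (fun x => 0 + x ∈ S) = S := by
    simp only [zero_add]
    exact Finset.filter_true_of_mem (fun x hx => hx)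
  rw [this, hc]
  norm_num

include h0 in
lemma sum_sig_one : ∑ y : Fin v → ZMod 2, sig S y ^ 1 = 0 := by
  rw [sig_pow_eq S 1, mom1 S 0, if_neg (h0S h0)]

include h0 hc hd in
lemma Tcard_eq : (((S ×ˢ S).filter fun z => z.1 + z.2 ∈ S).card : ℤ) = 84 := by
  have hz : ∑ y : Fin v → ZMod 2,
      (sig S y ^ 3 - 18 * sig S y ^ 2 + 44 * sig S y ^ 1 + 168 * 1) = 0 :=
    Finset.sum_eq_zero fun y _ => by
      have h := sig_factor_global h0 hc hd y
      linear_combination h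
  have hsplit : ∑ y : Fin v → ZMod 2,
      (sig S y ^ 3 - 18 * sig S y ^ 2 + 44 * sig S y ^ 1 + 168 * 1)
      = (∑ y : Fin v → ZMod 2, sig S y ^ 3) - 18 * (∑ y : Fin v → ZMod 2, sig S y ^ 2)
        + 44 * (∑ y : Fin v → ZMod 2, sig S y ^ 1)
        + 168 * (∑ _y : Fin v → ZMod 2, (1 : ℤ)) := by
    rw [Finset.mul_sum, Finset.mul_sum, Finset.mul_sum, ← Finset.sum_sub_distrib,
      ← Finset.sum_add_distrib, ← Finset.sum_add_distrib]
  have e3 : ∑ y : Fin v → ZMod 2, sig S y ^ 3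
      = 2 ^ v * (((S ×ˢ S).filter fun z => z.1 + z.2 ∈ S).card : ℤ) := by
    rw [sig_pow_eq S 3, mom3 S 0]
    simp only [zero_add]
  rw [hsplit, e3, sum_sig_sq h0 hc, sum_sig_one h0, sum_one_V] at hz
  have h2v : (0 : ℤ) < 2 ^ v := by positivity
  have : (2 ^ v : ℤ) * (((S ×ˢ S).filter fun z => z.1 + z.2 ∈ S).card : ℤ)
      = 2 ^ v * 84 := by linarith
  exact mul_left_cancel₀ (ne_of_gt h2v) this

include h0 hc hd in
lemma W4card_eq : (((S ×ˢ (S ×ˢ S)).filter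
      fun z => z.1 + z.2.1 + z.2.2 ∈ S).card : ℤ) = 896 := by
  have hz : ∑ y : Fin v → ZMod 2,
      (sig S y ^ 4 - 18 * sig S y ^ 3 + 44 * sig S y ^ 2 + 168 * sig S y ^ 1) = 0 :=
    Finset.sum_eq_zero fun y _ => by
      have h := sig_factor_global h0 hc hd y
      linear_combination (sig S y) * h
  have hsplit : ∑ y : Fin v → ZMod 2,
      (sig S y ^ 4 - 18 * sig S y ^ 3 + 44 * sig S y ^ 2 + 168 * sig S y ^ 1)
      = (∑ y : Fin v → ZMod 2, sig S y ^ 4) - 18 * (∑ y : Fin v → ZMod 2, sig S y ^ 3)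
        + 44 * (∑ y : Fin v → ZMod 2, sig S y ^ 2)
        + 168 * (∑ y : Fin v → ZMod 2, sig S y ^ 1) := by
    rw [Finset.mul_sum, Finset.mul_sum, Finset.mul_sum, ← Finset.sum_sub_distrib,
      ← Finset.sum_add_distrib, ← Finset.sum_add_distrib]
  have e3 : ∑ y : Fin v → ZMod 2, sig S y ^ 3 = 2 ^ v * 84 := by
    rw [sig_pow_eq S 3, mom3 S 0]
    congr 1
    have := Tcard_eq h0 hc hd
    simp only [zero_add]
    exact_mod_cast this
  rw [hsplit, mom4 S, e3, sum_sig_sq h0 hc, sum_sig_one h0] at hz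
  have h2v : (0 : ℤ) < 2 ^ v := by positivity
  have : (2 ^ v : ℤ) * (((S ×ˢ (S ×ˢ S)).filter
      fun z => z.1 + z.2.1 + z.2.2 ∈ S).card : ℤ) = 2 ^ v * 896 := by linarith
  exact mul_left_cancel₀ (ne_of_gt h2v) this

include h0 hc hd in
lemma Rcard_eq (p : Fin v → ZMod 2) (hp : p ∈ S) :
    (S.filter fun x => p + x ∈ S).card = 6 := by
  have hz : ∑ y : Fin v → ZMod 2,
      ((sig S y ^ 2 - 4 * sig S y ^ 1 - 12 * 1)
        - (eps p y * sig S y ^ 2 - 4 * (eps p y * sig S y ^ 1)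
            - 12 * (eps p y * sig S y ^ 0))) = 0 :=
    Finset.sum_eq_zero fun y _ => by
      have h := sig_factor_local h0 hc hd p hp y
      have hp0 : eps p y * sig S y ^ 0 = eps p y := by rw [pow_zero, mul_one]
      rw [hp0]
      linear_combination h
  have hsplit : ∑ y : Fin v → ZMod 2,
      ((sig S y ^ 2 - 4 * sig S y ^ 1 - 12 * 1)
        - (eps p y * sig S y ^ 2 - 4 * (eps p y * sig S y ^ 1)
            - 12 * (eps p y * sig S y ^ 0)))
      = ((∑ y : Fin v → ZMod 2, sig S y ^ 2) - 4 * (∑ y : Fin v → ZMod 2, sig S y ^ 1)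
          - 12 * (∑ _y : Fin v → ZMod 2, (1 : ℤ)))
        - ((∑ y : Fin v → ZMod 2, eps p y * sig S y ^ 2)
            - 4 * (∑ y : Fin v → ZMod 2, eps p y * sig S y ^ 1)
            - 12 * (∑ y : Fin v → ZMod 2, eps p y * sig S y ^ 0)) := by
    rw [Finset.mul_sum, Finset.mul_sum, Finset.mul_sum, Finset.mul_sum,
      ← Finset.sum_sub_distrib, ← Finset.sum_sub_distrib, ← Finset.sum_sub_distrib,
      ← Finset.sum_sub_distrib, ← Finset.sum_sub_distrib]
  rw [hsplit, sum_sig_sq h0 hc, sum_sig_one h0, sum_one_V, mom2 S p,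
    mom1 S p, if_pos hp, mom0 S p, if_neg (h0 p hp)] at hz
  have h2v : (0 : ℤ) < 2 ^ v := by positivity
  have : (2 ^ v : ℤ) * ((S.filter fun x => p + x ∈ S).card : ℤ)
      = 2 ^ v * 6 := by linarith
  have := mul_left_cancel₀ (ne_of_gt h2v) this
  exact_mod_cast this

include h0 hc hd in
lemma Gcard_eq (p : Fin v → ZMod 2) (hp : p ∈ S) :
    ((S ×ˢ S).filter fun z => p + z.1 + z.2 ∈ S).card = 64 := by
  have hz : ∑ y : Fin v → ZMod 2,
      ((sig S y ^ 3 - 4 * sig S y ^ 2 - 12 * sig S y ^ 1)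
        - (eps p y * sig S y ^ 3 - 4 * (eps p y * sig S y ^ 2)
            - 12 * (eps p y * sig S y ^ 1))) = 0 :=
    Finset.sum_eq_zero fun y _ => by
      have h := sig_factor_local h0 hc hd p hp y
      linear_combination (sig S y) * h
  have hsplit : ∑ y : Fin v → ZMod 2,
      ((sig S y ^ 3 - 4 * sig S y ^ 2 - 12 * sig S y ^ 1)
        - (eps p y * sig S y ^ 3 - 4 * (eps p y * sig S y ^ 2)
            - 12 * (eps p y * sig S y ^ 1)))
      = ((∑ y : Fin v → ZMod 2, sig S y ^ 3) - 4 * (∑ y : Fin v → ZMod 2, sig S y ^ 2)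
          - 12 * (∑ y : Fin v → ZMod 2, sig S y ^ 1))
        - ((∑ y : Fin v → ZMod 2, eps p y * sig S y ^ 3)
            - 4 * (∑ y : Fin v → ZMod 2, eps p y * sig S y ^ 2)
            - 12 * (∑ y : Fin v → ZMod 2, eps p y * sig S y ^ 1)) := by
    rw [Finset.mul_sum, Finset.mul_sum, Finset.mul_sum, Finset.mul_sum,
      ← Finset.sum_sub_distrib, ← Finset.sum_sub_distrib, ← Finset.sum_sub_distrib,
      ← Finset.sum_sub_distrib, ← Finset.sum_sub_distrib]
  have e3 : ∑ y : Fin v → ZMod 2, sig S y ^ 3 = 2 ^ v * 84 := by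
    rw [sig_pow_eq S 3, mom3 S 0]
    congr 1
    have := Tcard_eq h0 hc hd
    simp only [zero_add]
    exact_mod_cast this
  have eR : ∑ y : Fin v → ZMod 2, eps p y * sig S y ^ 2 = 2 ^ v * 6 := by
    rw [mom2 S p, Rcard_eq h0 hc hd p hp]
    norm_num
  rw [hsplit, e3, sum_sig_sq h0 hc, sum_sig_one h0, mom3 S p, eR,
    mom1 S p, if_pos hp] at hz
  have h2v : (0 : ℤ) < 2 ^ v := by positivity
  have : (2 ^ v : ℤ) * (((S ×ˢ S).filter fun z => p + z.1 + z.2 ∈ S).card : ℤ)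
      = 2 ^ v * 64 := by linarith
  have := mul_left_cancel₀ (ne_of_gt h2v) this
  exact_mod_cast this

-- ------------------- the pair-sum function -------------------

variable (S) in
/-- number of ordered pairs of points of `S` with sum `u` -/
def Afun (u : Fin v → ZMod 2) : ℕ :=
  ((S ×ˢ S).filter fun z => z.1 + z.2 = u).card

lemma Afun_zero (hc : S.card = 14) : Afun S 0 = 14 := by
  rw [Afun, ← hc]
  apply Finset.card_bij (fun z _ => z.1)
  · intro z hz
    exact (Finset.mem_product.mp (Finset.mem_filter.mp hz).1).1
  · intro z hz z' hz' h1
    have e := vzero_iff.mp (Finset.mem_filter.mp hz).2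
    have e' := vzero_iff.mp (Finset.mem_filter.mp hz').2
    exact Prod.ext h1 (by rw [← e, ← e', h1])
  · intro x hx
    exact ⟨(x, x), Finset.mem_filter.mpr
      ⟨Finset.mem_product.mpr ⟨hx, hx⟩, vadd_self x⟩, rfl⟩

lemma Afun_mem (u : Fin v → ZMod 2) :
    Afun S u = (S.filter fun x => u + x ∈ S).card := by
  rw [Afun]
  apply Finset.card_bij (fun z _ => z.1)
  · intro z hz
    obtain ⟨hzp, hzs⟩ := Finset.mem_filter.mp hz
    obtain ⟨h1, h2⟩ := Finset.mem_product.mp hzp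
    refine Finset.mem_filter.mpr ⟨h1, ?_⟩
    have : u + z.1 = z.2 := by
      rw [← hzs]
      calc z.1 + z.2 + z.1 = z.2 + z.1 + z.1 := by ring_nf
        _ = z.2 := vcancel' _ _
    rw [this]; exact h2
  · intro z hz z' hz' h1
    have hzs := (Finset.mem_filter.mp hz).2
    have hzs' := (Finset.mem_filter.mp hz').2
    refine Prod.ext h1 ?_
    have e : z.2 = u + z.1 := by
      rw [← hzs]
      calc z.2 = z.1 + z.2 + z.1 := by
            rw [add_comm z.1 z.2, add_assoc, vadd_self, add_zero]
        _ = _ := rfl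
    have e' : z'.2 = u + z'.1 := by
      rw [← hzs']
      rw [add_comm z'.1 z'.2, add_assoc, vadd_self, add_zero]
    rw [e, e', h1]
  · intro x hx
    obtain ⟨h1, h2⟩ := Finset.mem_filter.mp hx
    refine ⟨(x, u + x), Finset.mem_filter.mpr
      ⟨Finset.mem_product.mpr ⟨h1, h2⟩, ?_⟩, rfl⟩
    rw [← add_assoc, add_comm x u, add_assoc, vadd_self, add_zero]

lemma Afun_even (u : Fin v → ZMod 2) (hu : u ≠ 0) : Even (Afun S u) := by
  have hsum : ∑ _z ∈ (S ×ˢ S).filter (fun z => z.1 + z.2 = u), (1 : ZMod 2) = 0 := by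
    apply Finset.sum_involution (fun z _ => (z.2, z.1))
    · intro z _; exact z2add 1
    · intro z hz _ h
      obtain ⟨_, hzs⟩ := Finset.mem_filter.mp hz
      have : z.1 = z.2 := by
        have := congrArg Prod.fst h
        exact this.symm
      rw [this, vadd_self] at hzs
      exact hu hzs.symm
    · intro z hz
      obtain ⟨hzp, hzs⟩ := Finset.mem_filter.mp hz
      obtain ⟨h1, h2⟩ := Finset.mem_product.mp hzp
      exact Finset.mem_filter.mpr ⟨Finset.mem_product.mpr ⟨h2, h1⟩,
        by rw [add_comm]; exact hzs⟩
    · intro z _; rfl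
  rw [Finset.sum_const, nsmul_eq_mul, mul_one] at hsum
  have := (ZMod.natCast_eq_zero_iff _ 2).mp hsum
  obtain ⟨k, hk⟩ := this
  exact ⟨k, by rw [Afun]; omega⟩

include hc in
lemma Afun_total : ∑ u : Fin v → ZMod 2, Afun S u = 196 := by
  have := Finset.card_eq_sum_card_fiberwise
    (f := fun z : (Fin v → ZMod 2) × (Fin v → ZMod 2) => z.1 + z.2)
    (s := S ×ˢ S) (t := Finset.univ) (fun z _ => Finset.mem_univ _)
  rw [Finset.card_product, hc] at this
  simpa [Afun] using this.symm

include h0 hc hd in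
lemma Afun_sq_total : ∑ u : Fin v → ZMod 2, Afun S u ^ 2 = 896 := by
  classical
  set PP := S ×ˢ S with hPP
  set B := (PP ×ˢ PP).filter
    (fun w => w.1.1 + w.1.2 = w.2.1 + w.2.2) with hB
  have step1 : B.card = ∑ u : Fin v → ZMod 2, Afun S u ^ 2 := by
    rw [Finset.card_eq_sum_card_fiberwise
      (f := fun w : ((Fin v → ZMod 2) × (Fin v → ZMod 2)) ×
          ((Fin v → ZMod 2) × (Fin v → ZMod 2)) => w.1.1 + w.1.2)
      (s := B) (t := Finset.univ) (fun w _ => Finset.mem_univ _)]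
    refine Finset.sum_congr rfl (fun u _ => ?_)
    have hfib : B.filter (fun w => w.1.1 + w.1.2 = u)
        = (PP.filter fun z => z.1 + z.2 = u) ×ˢ (PP.filter fun z => z.1 + z.2 = u) := by
      ext w
      simp only [hB, Finset.mem_filter, Finset.mem_product]
      constructor
      · rintro ⟨⟨⟨hw1, hw2⟩, heq⟩, hu⟩
        exact ⟨⟨hw1, hu⟩, ⟨hw2, heq ▸ hu⟩⟩
      · rintro ⟨⟨hw1, hu1⟩, ⟨hw2, hu2⟩⟩
        exact ⟨⟨⟨hw1, hw2⟩, hu1.trans hu2.symm⟩, hu1⟩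
    rw [hfib, Finset.card_product, Afun, sq]
  have step2 : B.card = ((S ×ˢ (S ×ˢ S)).filter
      fun z => z.1 + z.2.1 + z.2.2 ∈ S).card := by
    apply Finset.card_bij (fun w _ => (w.1.1, (w.1.2, w.2.1)))
    · intro w hw
      simp only [hB, hPP, Finset.mem_filter, Finset.mem_product] at hw ⊢
      obtain ⟨⟨⟨ha, hb⟩, ⟨hc', hd'⟩⟩, heq⟩ := hw
      refine ⟨⟨ha, hb, hc'⟩, ?_⟩
      have : w.1.1 + w.1.2 + w.2.1 = w.2.2 := by
        rw [heq, add_comm w.2.1 w.2.2, add_assoc, vadd_self, add_zero]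
      rw [this]; exact hd'
    · intro w hw w' hw' h
      simp only [hB, hPP, Finset.mem_filter, Finset.mem_product] at hw hw'
      have h1 : w.1.1 = w'.1.1 := congrArg (fun z => z.1) h
      have h2 : w.1.2 = w'.1.2 := congrArg (fun z => z.2.1) h
      have h3 : w.2.1 = w'.2.1 := congrArg (fun z => z.2.2) h
      have h4 : w.2.2 = w'.2.2 := by
        have e : w.1.1 + w.1.2 + w.2.1 = w.2.2 := by
          rw [hw.2, add_comm w.2.1 w.2.2, add_assoc, vadd_self, add_zero]
        have e' : w'.1.1 + w'.1.2 + w'.2.1 = w'.2.2 := by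
          rw [hw'.2, add_comm w'.2.1 w'.2.2, add_assoc, vadd_self, add_zero]
        rw [← e, ← e', h1, h2, h3]
      exact Prod.ext (Prod.ext h1 h2) (Prod.ext h3 h4)
    · intro z hz
      simp only [Finset.mem_filter, Finset.mem_product] at hz
      obtain ⟨⟨ha, hb, hc'⟩, hmem⟩ := hz
      refine ⟨((z.1, z.2.1), (z.2.2, z.1 + z.2.1 + z.2.2)), ?_, rfl⟩
      simp only [hB, hPP, Finset.mem_filter, Finset.mem_product]
      refine ⟨⟨⟨ha, hb⟩, ⟨hc', hmem⟩⟩, ?_⟩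
      rw [add_comm z.2.2 (z.1 + z.2.1 + z.2.2), add_assoc (z.1 + z.2.1) z.2.2,
        vadd_self, add_zero]
  have hW := W4card_eq h0 hc hd
  have : (((S ×ˢ (S ×ˢ S)).filter fun z => z.1 + z.2.1 + z.2.2 ∈ S).card) = 896 := by
    exact_mod_cast hW
  omega

include h0 hc hd in
lemma Afun_bound (u : Fin v → ZMod 2) (hu : u ≠ 0) (huS : u ∉ S) :
    Afun S u ≤ 2 := by
  classical
  set T : Finset (Fin v → ZMod 2) := insert 0 S with hT
  have h0nS : (0 : Fin v → ZMod 2) ∉ S := h0S h0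
  have hsub : T ⊆ Finset.univ := Finset.subset_univ T
  have hsumS : ∑ x ∈ S, Afun S x = 84 := by
    rw [Finset.sum_congr rfl (fun x hx => by
      rw [Afun_mem, Rcard_eq h0 hc hd x hx])]
    rw [Finset.sum_const, hc]; rfl
  have hsumS2 : ∑ x ∈ S, Afun S x ^ 2 = 504 := by
    rw [Finset.sum_congr rfl (fun x hx => by
      rw [Afun_mem, Rcard_eq h0 hc hd x hx])]
    rw [Finset.sum_const, hc]; rfl
  have hsumT : ∑ x ∈ T, Afun S x = 98 := by
    rw [hT, Finset.sum_insert h0nS, Afun_zero hc, hsumS]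
  have hsumT2 : ∑ x ∈ T, Afun S x ^ 2 = 700 := by
    rw [hT, Finset.sum_insert h0nS, Afun_zero hc, hsumS2]
    norm_num
  have hrest : ∑ x ∈ Finset.univ \ T, Afun S x = 98 := by
    have h := Finset.sum_sdiff (f := Afun S) hsub
    rw [hsumT, Afun_total hc] at h
    omega
  have hrest2 : ∑ x ∈ Finset.univ \ T, Afun S x ^ 2 = 196 := by
    have h : (∑ x ∈ Finset.univ \ T, Afun S x ^ 2) + ∑ x ∈ T, Afun S x ^ 2
        = ∑ x ∈ Finset.univ, Afun S x ^ 2 := Finset.sum_sdiff hsub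
    rw [hsumT2] at h
    rw [Afun_sq_total h0 hc hd] at h
    omega
  have hle : ∀ x ∈ Finset.univ \ T, 2 * Afun S x ≤ Afun S x ^ 2 := by
    intro x hx
    have hx0 : x ≠ 0 := by
      intro h'; rw [hT] at hx
      exact (Finset.mem_sdiff.mp hx).2 (h' ▸ Finset.mem_insert_self 0 S)
    obtain ⟨k, hk⟩ := Afun_even (S := S) x hx0
    rcases Nat.eq_zero_or_pos k with hk0 | hk1
    · rw [hk, hk0]; norm_num
    · have hkk : k ≤ k * k := Nat.le_mul_of_pos_left k hk1
      calc 2 * Afun S x = 4 * k := by rw [hk]; ring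
        _ ≤ 4 * (k * k) := by omega
        _ = Afun S x ^ 2 := by rw [hk]; ring
  have heq : ∑ x ∈ Finset.univ \ T, 2 * Afun S x
      = ∑ x ∈ Finset.univ \ T, Afun S x ^ 2 := by
    rw [← Finset.mul_sum, hrest, hrest2]
    norm_num
  have hpt := (Finset.sum_eq_sum_iff_of_le hle).mp heq
  have hmem : u ∈ Finset.univ \ T := by
    rw [hT, Finset.mem_sdiff]
    refine ⟨Finset.mem_univ _, ?_⟩
    intro h'
    rcases Finset.mem_insert.mp h' with h'' | h''
    · exact hu h''
    · exact huS h''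
  have heq2 := hpt u hmem
  by_contra hgt
  push_neg at hgt
  have h3 : 3 ≤ Afun S u := hgt
  have : 3 * Afun S u ≤ Afun S u ^ 2 := by
    calc 3 * Afun S u ≤ Afun S u * Afun S u := Nat.mul_le_mul_right _ h3
      _ = Afun S u ^ 2 := (pow_two _).symm
  rw [← heq2] at this
  omega

-- ------------------- endgame: building the planes -------------------

variable (S) in
/-- neighbours of `p`: points on a line of `S` through `p` -/
def Np (p : Fin v → ZMod 2) : Finset (Fin v → ZMod 2) :=
  S.filter fun x => p + x ∈ S

lemma mem_Np {p x : Fin v → ZMod 2} : x ∈ Np S p ↔ x ∈ S ∧ p + x ∈ S :=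
  Finset.mem_filter

include h0 hc hd in
lemma Np_card (p : Fin v → ZMod 2) (hp : p ∈ S) : (Np S p).card = 6 :=
  Rcard_eq h0 hc hd p hp

lemma Np_add {p x : Fin v → ZMod 2} (hx : x ∈ Np S p) : p + x ∈ Np S p := by
  obtain ⟨h1, h2⟩ := mem_Np.mp hx
  exact mem_Np.mpr ⟨h2, by rw [vcancel]; exact h1⟩

include h0 in
lemma Np_not_self (p : Fin v → ZMod 2) : p ∉ Np S p := by
  intro h
  have := (mem_Np.mp h).2
  rw [vadd_self] at this
  exact h0S h0 this

include h0 in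
lemma Np_ne {p x : Fin v → ZMod 2} (hx : x ∈ Np S p) : x ≠ p := by
  intro h
  rw [h] at hx
  exact Np_not_self h0 p hx

include h0 in
lemma Np_add_ne {p x : Fin v → ZMod 2} (hp : p ∈ S) (hx : x ∈ Np S p) :
    p + x ≠ x := by
  intro h
  have h2 : p = x + x := by
    have := congrArg (fun z => z + x) h
    simpa [vcancel'] using this
  rw [vadd_self] at h2
  exact (h0 p hp) h2

include h0 hc hd in
lemma CP_card (p : Fin v → ZMod 2) (hp : p ∈ S) :
    (((Np S p) ×ˢ (Np S p)).filter fun z => z.1 ≠ z.2 ∧ z.2 ≠ p + z.1).card = 24 := by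
  rw [card_filter_prod (Np S p) (Np S p) (fun a b => a ≠ b ∧ b ≠ p + a)]
  have key : ∀ x ∈ Np S p,
      ((Np S p).filter fun b => x ≠ b ∧ b ≠ p + x).card = 4 := by
    intro x hx
    have hfe : (Np S p).filter (fun b => x ≠ b ∧ b ≠ p + x)
        = ((Np S p).erase (p + x)).erase x := by
      ext b
      simp only [Finset.mem_filter, Finset.mem_erase]
      constructor
      · rintro ⟨hb, h1, h2⟩; exact ⟨fun h => h1 h.symm, h2, hb⟩
      · rintro ⟨h1, h2, hb⟩; exact ⟨hb, fun h => h1 h.symm, h2⟩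
    rw [hfe, Finset.card_erase_of_mem, Finset.card_erase_of_mem, Np_card h0 hc hd p hp]
    · exact Np_add hx
    · rw [Finset.mem_erase]
      exact ⟨(Np_add_ne h0 hp hx).symm, hx⟩
  rw [Finset.sum_congr rfl key, Finset.sum_const, Np_card h0 hc hd p hp]
  rfl

include h0 hc hd in
lemma Deg_card (p : Fin v → ZMod 2) (hp : p ∈ S) :
    ((S ×ˢ S).filter fun z =>
      (p + z.1 + z.2 ∈ S) ∧ (z.1 = z.2 ∨ z.1 = p ∨ z.2 = p)).card = 40 := by
  classical
  set D1 := S.image (fun x => (x, x)) with hD1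
  set D2 := S.image (fun x => (x, p)) with hD2
  set D3 := S.image (fun x => (p, x)) with hD3
  have hset : (S ×ˢ S).filter (fun z =>
      (p + z.1 + z.2 ∈ S) ∧ (z.1 = z.2 ∨ z.1 = p ∨ z.2 = p)) = D1 ∪ D2 ∪ D3 := by
    ext z
    simp only [Finset.mem_filter, Finset.mem_product, Finset.mem_union, hD1, hD2, hD3,
      Finset.mem_image]
    constructor
    · rintro ⟨⟨hz1, hz2⟩, _, (h | h | h)⟩
      · exact Or.inl (Or.inl ⟨z.1, hz1, Prod.ext rfl h⟩)
      · exact Or.inr ⟨z.2, hz2, Prod.ext h.symm rfl⟩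
      · exact Or.inl (Or.inr ⟨z.1, hz1, Prod.ext rfl h.symm⟩)
    · rintro ((⟨x, hxS, hxz⟩ | ⟨x, hxS, hxz⟩) | ⟨x, hxS, hxz⟩) <;> rw [← hxz]
      · refine ⟨⟨hxS, hxS⟩, ?_, Or.inl rfl⟩
        show p + x + x ∈ S
        rw [vcancel']; exact hp
      · refine ⟨⟨hxS, hp⟩, ?_, Or.inr (Or.inr rfl)⟩
        show p + x + p ∈ S
        rw [vaba]; exact hxS
      · refine ⟨⟨hp, hxS⟩, ?_, Or.inr (Or.inl rfl)⟩
        show p + p + x ∈ S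
        rw [vadd_self, zero_add]; exact hxS
  rw [hset]
  have hinj1 : Function.Injective (fun x : Fin v → ZMod 2 => (x, x)) :=
    fun a b h => congrArg Prod.fst h
  have hinj2 : Function.Injective (fun x : Fin v → ZMod 2 => (x, p)) :=
    fun a b h => congrArg Prod.fst h
  have hinj3 : Function.Injective (fun x : Fin v → ZMod 2 => (p, x)) :=
    fun a b h => congrArg Prod.snd h
  have hc1 : D1.card = 14 := by rw [hD1, Finset.card_image_of_injective _ hinj1, hc]
  have hc2 : D2.card = 14 := by rw [hD2, Finset.card_image_of_injective _ hinj2, hc]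
  have hc3 : D3.card = 14 := by rw [hD3, Finset.card_image_of_injective _ hinj3, hc]
  have hi12 : D1 ∩ D2 = {(p, p)} := by
    ext z
    simp only [hD1, hD2, Finset.mem_inter, Finset.mem_image, Finset.mem_singleton]
    constructor
    · rintro ⟨⟨x, hxS, hxz⟩, ⟨x', hxS', hxz'⟩⟩
      rw [← hxz] at hxz'
      have h1 : x' = x := congrArg Prod.fst hxz'
      have h2 : p = x := congrArg Prod.snd hxz'
      rw [← hxz, ← h2]
    · rintro rfl
      exact ⟨⟨p, hp, rfl⟩, ⟨p, hp, rfl⟩⟩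
  have hiU3 : (D1 ∪ D2) ∩ D3 = {(p, p)} := by
    ext z
    simp only [hD1, hD2, hD3, Finset.mem_inter, Finset.mem_union, Finset.mem_image,
      Finset.mem_singleton]
    constructor
    · rintro ⟨(⟨x, hxS, hxz⟩ | ⟨x, hxS, hxz⟩), ⟨x', hxS', hxz'⟩⟩
      · rw [← hxz] at hxz'
        have h1 : p = x := congrArg Prod.fst hxz'
        rw [← hxz, ← h1]
      · rw [← hxz] at hxz'
        have h1 : p = x := congrArg Prod.fst hxz'
        have h2 : x' = p := congrArg Prod.snd hxz'
        rw [← hxz, ← h1]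
    · rintro rfl
      exact ⟨Or.inl ⟨p, hp, rfl⟩, ⟨p, hp, rfl⟩⟩
  have hu12 : (D1 ∪ D2).card = 27 := by
    have := Finset.card_union_add_card_inter D1 D2
    rw [hi12, hc1, hc2, Finset.card_singleton] at this
    omega
  have := Finset.card_union_add_card_inter (D1 ∪ D2) D3
  rw [hiU3, hu12, hc3, Finset.card_singleton] at this
  omega

include h0 hc hd in
lemma claimA (p : Fin v → ZMod 2) (hp : p ∈ S) :
    ∀ x ∈ Np S p, ∀ y ∈ Np S p, x ≠ y → y ≠ p + x → p + x + y ∈ S := by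
  classical
  set CP := ((Np S p) ×ˢ (Np S p)).filter
    (fun z => z.1 ≠ z.2 ∧ z.2 ≠ p + z.1) with hCP
  set NDeg := ((S ×ˢ S).filter fun z => p + z.1 + z.2 ∈ S).filter
    (fun z => ¬ (z.1 = z.2 ∨ z.1 = p ∨ z.2 = p)) with hNDeg
  have hNDcard : NDeg.card = 24 := by
    have hsplit := Finset.card_filter_add_card_filter_not
      (s := (S ×ˢ S).filter fun z => p + z.1 + z.2 ∈ S)
      (p := fun z => z.1 = z.2 ∨ z.1 = p ∨ z.2 = p)
    have hG := Gcard_eq h0 hc hd p hp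
    have hDeg := Deg_card h0 hc hd p hp
    rw [Finset.filter_filter] at hsplit
    rw [hDeg] at hsplit
    rw [hG] at hsplit
    rw [← hNDeg] at hsplit
    omega
  have hsub : NDeg ⊆ CP := by
    intro z hz
    rw [hNDeg, Finset.mem_filter, Finset.mem_filter, Finset.mem_product] at hz
    obtain ⟨⟨⟨hx, hy⟩, hw⟩, hnd⟩ := hz
    push_neg at hnd
    obtain ⟨hxy, hxp, hyp⟩ := hnd
    set x := z.1
    set y := z.2
    set w := p + x + y with hwdef
    have hw0 : w ≠ 0 := h0 w hw
    have hyw : y ≠ w := by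
      intro h
      have h3 : y + y = p + x + y + y := congrArg (fun t => t + y) h
      rw [vadd_self, vcancel'] at h3
      exact hxp (vzero_iff.mp h3.symm).symm
    have hxw : x ≠ w := by
      intro h
      have h3 : p + x + (p + x + y) = p + x + x := congrArg (fun t => p + x + t) h.symm
      rw [vcancel, add_assoc, vadd_self, add_zero] at h3
      exact hyp h3
    have hxNp : x ∈ Np S p := by
      refine mem_Np.mpr ⟨hx, ?_⟩
      by_contra hpx
      have hu0 : p + x ≠ 0 := fun h => hxp (vzero_iff.mp h).symm
      have hbound := Afun_bound h0 hc hd (p + x) hu0 hpx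
      have hfour : ({(p, x), (x, p), (y, w), (w, y)} :
          Finset ((Fin v → ZMod 2) × (Fin v → ZMod 2)))
          ⊆ (S ×ˢ S).filter (fun t => t.1 + t.2 = p + x) := by
        intro t ht
        simp only [Finset.mem_insert, Finset.mem_singleton] at ht
        rcases ht with rfl | rfl | rfl | rfl
        · exact Finset.mem_filter.mpr ⟨Finset.mem_product.mpr ⟨hp, hx⟩, rfl⟩
        · exact Finset.mem_filter.mpr ⟨Finset.mem_product.mpr ⟨hx, hp⟩, add_comm x p⟩
        · refine Finset.mem_filter.mpr ⟨Finset.mem_product.mpr ⟨hy, hw⟩, ?_⟩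
          rw [hwdef, add_comm y (p + x + y), add_assoc (p + x) y y, vadd_self, add_zero]
        · refine Finset.mem_filter.mpr ⟨Finset.mem_product.mpr ⟨hw, hy⟩, ?_⟩
          rw [hwdef, add_comm (p + x + y) y]
          rw [add_comm y (p + x + y), add_assoc (p + x) y y, vadd_self, add_zero]
      have n1 : (p, x) ∉ ({(x, p), (y, w), (w, y)} :
          Finset ((Fin v → ZMod 2) × (Fin v → ZMod 2))) := by
        simp only [Finset.mem_insert, Finset.mem_singleton, Prod.mk.injEq]
        push_neg
        exact ⟨fun h => absurd h.symm hxp, fun h => absurd h.symm hyp, fun _ => hxy⟩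
      have n2 : (x, p) ∉ ({(y, w), (w, y)} :
          Finset ((Fin v → ZMod 2) × (Fin v → ZMod 2))) := by
        simp only [Finset.mem_insert, Finset.mem_singleton, Prod.mk.injEq]
        push_neg
        exact ⟨fun h => absurd h hxy, fun h => absurd h hxw⟩
      have n3 : (y, w) ∉ ({(w, y)} :
          Finset ((Fin v → ZMod 2) × (Fin v → ZMod 2))) := by
        simp only [Finset.mem_singleton, Prod.mk.injEq]
        push_neg
        exact fun h => absurd h hyw
      have hfcard : ({(p, x), (x, p), (y, w), (w, y)} :
          Finset ((Fin v → ZMod 2) × (Fin v → ZMod 2))).card = 4 := by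
        rw [Finset.card_insert_of_notMem n1, Finset.card_insert_of_notMem n2,
          Finset.card_insert_of_notMem n3, Finset.card_singleton]
      have hle4 : 4 ≤ Afun S (p + x) := by
        rw [Afun, ← hfcard]
        exact Finset.card_le_card hfour
      omega
    have hyNp : y ∈ Np S p := by
      refine mem_Np.mpr ⟨hy, ?_⟩
      by_contra hpy
      have hu0 : p + y ≠ 0 := fun h => hyp (vzero_iff.mp h).symm
      have hbound := Afun_bound h0 hc hd (p + y) hu0 hpy
      have hxwsum : x + w = p + y := by
        rw [hwdef]
        rw [add_comm x (p + x + y), add_comm (p + x) y, add_assoc, add_assoc,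
          vadd_self, add_zero, add_comm y p]
      have hfour : ({(p, y), (y, p), (x, w), (w, x)} :
          Finset ((Fin v → ZMod 2) × (Fin v → ZMod 2)))
          ⊆ (S ×ˢ S).filter (fun t => t.1 + t.2 = p + y) := by
        intro t ht
        simp only [Finset.mem_insert, Finset.mem_singleton] at ht
        rcases ht with rfl | rfl | rfl | rfl
        · exact Finset.mem_filter.mpr ⟨Finset.mem_product.mpr ⟨hp, hy⟩, rfl⟩
        · exact Finset.mem_filter.mpr ⟨Finset.mem_product.mpr ⟨hy, hp⟩, add_comm y p⟩
        · exact Finset.mem_filter.mpr ⟨Finset.mem_product.mpr ⟨hx, hw⟩, hxwsum⟩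
        · exact Finset.mem_filter.mpr ⟨Finset.mem_product.mpr ⟨hw, hx⟩,
            (add_comm w x) ▸ hxwsum⟩
      have n1 : (p, y) ∉ ({(y, p), (x, w), (w, x)} :
          Finset ((Fin v → ZMod 2) × (Fin v → ZMod 2))) := by
        simp only [Finset.mem_insert, Finset.mem_singleton, Prod.mk.injEq]
        push_neg
        exact ⟨fun h => absurd h.symm hyp, fun h => absurd h.symm hxp,
          fun _ => Ne.symm hxy⟩
      have n2 : (y, p) ∉ ({(x, w), (w, x)} :
          Finset ((Fin v → ZMod 2) × (Fin v → ZMod 2))) := by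
        simp only [Finset.mem_insert, Finset.mem_singleton, Prod.mk.injEq]
        push_neg
        exact ⟨fun h => absurd h (Ne.symm hxy), fun h => absurd h hyw⟩
      have n3 : (x, w) ∉ ({(w, x)} :
          Finset ((Fin v → ZMod 2) × (Fin v → ZMod 2))) := by
        simp only [Finset.mem_singleton, Prod.mk.injEq]
        push_neg
        exact fun h => absurd h hxw
      have hfcard : ({(p, y), (y, p), (x, w), (w, x)} :
          Finset ((Fin v → ZMod 2) × (Fin v → ZMod 2))).card = 4 := by
        rw [Finset.card_insert_of_notMem n1, Finset.card_insert_of_notMem n2,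
          Finset.card_insert_of_notMem n3, Finset.card_singleton]
      have hle4 : 4 ≤ Afun S (p + y) := by
        rw [Afun, ← hfcard]
        exact Finset.card_le_card hfour
      omega
    have hynepx : y ≠ p + x := by
      intro h
      apply h0 w hw
      rw [hwdef, h, vadd_self]
    exact Finset.mem_filter.mpr ⟨Finset.mem_product.mpr ⟨hxNp, hyNp⟩, hxy, hynepx⟩
  have hCPcard : CP.card = 24 := CP_card h0 hc hd p hp
  have heq : NDeg = CP :=
    Finset.eq_of_subset_of_card_le hsub (by rw [hCPcard, hNDcard])
  intro x hx y hy hxy hynepx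
  have hmem : (x, y) ∈ CP :=
    Finset.mem_filter.mpr ⟨Finset.mem_product.mpr ⟨hx, hy⟩, hxy, hynepx⟩
  rw [← heq, hNDeg] at hmem
  exact (Finset.mem_filter.mp (Finset.mem_filter.mp hmem).1).2

include h0 hc hd in
lemma closure_Np (p : Fin v → ZMod 2) (hp : p ∈ S) :
    ∀ x ∈ Np S p, ∀ y ∈ Np S p, x ≠ y → y ≠ p + x → x + y ∈ Np S p := by
  intro x hx y hy hxy hynepx
  have hxS := (mem_Np.mp hx).1
  have hyS := (mem_Np.mp hy).1
  have hpxy : p + x + y ∈ S := claimA h0 hc hd p hp x hx y hy hxy hynepx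
  set q := p + x with hq
  have hqS : q ∈ S := (mem_Np.mp hx).2
  have hpNq : p ∈ Np S q := by
    refine mem_Np.mpr ⟨hp, ?_⟩
    rw [hq, add_comm p x, add_assoc, vadd_self, add_zero]
    exact hxS
  have hyNq : y ∈ Np S q := mem_Np.mpr ⟨hyS, hpxy⟩
  have hqp : q + p = x := by
    rw [hq, add_comm p x, add_assoc, vadd_self, add_zero]
  have hkey := claimA h0 hc hd q hqS p hpNq y hyNq
    (Ne.symm (Np_ne h0 hy)) (by rw [hqp]; exact Ne.symm hxy)
  rw [hqp] at hkey
  exact mem_Np.mpr ⟨hkey, by rw [← add_assoc]; exact hpxy⟩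

-- ------------------- planes as subgroups -------------------

variable (S) in
def Pfin (p : Fin v → ZMod 2) : Finset (Fin v → ZMod 2) := insert p (Np S p)

variable (S) in
def Gfin (p : Fin v → ZMod 2) : Finset (Fin v → ZMod 2) := insert 0 (Pfin S p)

include h0 hc hd in
lemma Pfin_card (p : Fin v → ZMod 2) (hp : p ∈ S) : (Pfin S p).card = 7 := by
  rw [Pfin, Finset.card_insert_of_notMem (Np_not_self h0 p), Np_card h0 hc hd p hp]

lemma Pfin_subset (p : Fin v → ZMod 2) (hp : p ∈ S) : Pfin S p ⊆ S := by
  rw [Pfin]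
  exact Finset.insert_subset hp (Finset.filter_subset _ _)

include h0 in
lemma zero_not_Pfin (p : Fin v → ZMod 2) (hp : p ∈ S) : (0 : Fin v → ZMod 2) ∉ Pfin S p :=
  fun h => h0S h0 (Pfin_subset p hp h)

include h0 hc hd in
lemma Gfin_add (p : Fin v → ZMod 2) (hp : p ∈ S) :
    ∀ a ∈ Gfin S p, ∀ b ∈ Gfin S p, a + b ∈ Gfin S p := by
  have hNsub : ∀ x ∈ Np S p, x ∈ Gfin S p := fun x hx =>
    Finset.mem_insert_of_mem (Finset.mem_insert_of_mem hx)
  have hpG : p ∈ Gfin S p :=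
    Finset.mem_insert_of_mem (Finset.mem_insert_self p _)
  have h0G : (0 : Fin v → ZMod 2) ∈ Gfin S p := Finset.mem_insert_self 0 _
  have hmem : ∀ a, a ∈ Gfin S p → a = 0 ∨ a = p ∨ a ∈ Np S p := by
    intro a ha
    rcases Finset.mem_insert.mp ha with h | h
    · exact Or.inl h
    · rcases Finset.mem_insert.mp h with h' | h'
      · exact Or.inr (Or.inl h')
      · exact Or.inr (Or.inr h')
  intro a ha b hb
  rcases hmem a ha with rfl | rfl | haN
  · rw [zero_add]; exact hb
  · rcases hmem b hb with rfl | rfl | hbN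
    · rw [add_zero]; exact ha
    · rw [vadd_self]; exact h0G
    · exact hNsub _ (Np_add hbN)
  · rcases hmem b hb with rfl | rfl | hbN
    · rw [add_zero]; exact ha
    · rw [add_comm]; exact hNsub _ (Np_add haN)
    · by_cases hab : a = b
      · rw [hab, vadd_self]; exact h0G
      · by_cases hbpa : b = p + a
        · rw [hbpa, add_comm a (p + a), add_assoc, vadd_self, add_zero]
          exact hpG
        · exact hNsub _ (closure_Np h0 hc hd p hp a haN b hbN hab hbpa)

include h0 hc hd in
lemma plane_determined (r : Fin v → ZMod 2) (hr : r ∈ S) (x : Fin v → ZMod 2)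
    (hx : x ∈ Pfin S r) : insert x (Np S x) = Pfin S r := by
  have hxS : x ∈ S := Pfin_subset r hr hx
  have hsub : (Pfin S r).erase x ⊆ Np S x := by
    intro z hz
    obtain ⟨hzx, hzP⟩ := Finset.mem_erase.mp hz
    have hxG : x ∈ Gfin S r := Finset.mem_insert_of_mem hx
    have hzG : z ∈ Gfin S r := Finset.mem_insert_of_mem hzP
    have hsumG : x + z ∈ Gfin S r := Gfin_add h0 hc hd r hr x hxG z hzG
    have hsum0 : x + z ≠ 0 := fun h => hzx (vzero_iff.mp h).symm
    have hsumP : x + z ∈ Pfin S r := by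
      rcases Finset.mem_insert.mp hsumG with h | h
      · exact absurd h hsum0
      · exact h
    exact mem_Np.mpr ⟨Pfin_subset r hr hzP, Pfin_subset r hr hsumP⟩
  have hcards : (Np S x).card ≤ ((Pfin S r).erase x).card := by
    rw [Finset.card_erase_of_mem hx, Pfin_card h0 hc hd r hr,
      Np_card h0 hc hd x hxS]
  have heq : (Pfin S r).erase x = Np S x :=
    Finset.eq_of_subset_of_card_le hsub hcards
  rw [← heq, Finset.insert_erase hx]

def mkSub (G : Finset (Fin v → ZMod 2)) (hz : (0 : Fin v → ZMod 2) ∈ G)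
    (hadd : ∀ a ∈ G, ∀ b ∈ G, a + b ∈ G) : Submodule (ZMod 2) (Fin v → ZMod 2) where
  carrier := ↑G
  add_mem' := fun {a b} ha hb =>
    Finset.mem_coe.mpr (hadd a (Finset.mem_coe.mp ha) b (Finset.mem_coe.mp hb))
  zero_mem' := Finset.mem_coe.mpr hz
  smul_mem' := by
    intro c x hx
    rcases z2cases c with rfl | rfl
    · rw [zero_smul]; exact Finset.mem_coe.mpr hz
    · rw [one_smul]; exact hx

lemma mem_mkSub {G : Finset (Fin v → ZMod 2)} {hz hadd} {x : Fin v → ZMod 2} :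
    x ∈ mkSub G hz hadd ↔ x ∈ G := Finset.mem_coe

lemma finrank_mkSub (G : Finset (Fin v → ZMod 2)) (hz hadd) (hG : G.card = 8) :
    finrank (ZMod 2) ↥(mkSub G hz hadd) = 3 := by
  classical
  set W := mkSub G hz hadd with hW
  letI : Fintype ↥W := Fintype.ofFinite _
  have h1 : Fintype.card ↥W = 8 := by
    rw [Fintype.card_congr (Equiv.subtypeEquivRight
      (fun x => (mem_mkSub (G := G) (hz := hz) (hadd := hadd) (x := x))))]
    rw [Fintype.card_coe, hG]
  have h2 : Fintype.card ↥W = Fintype.card (ZMod 2) ^ finrank (ZMod 2) ↥W :=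
    card_eq_pow_finrank (K := ZMod 2) (V := ↥W)
  rw [h1, ZMod.card] at h2
  have : (2 : ℕ) ^ finrank (ZMod 2) ↥W = 2 ^ 3 := by omega
  exact Nat.pow_right_injective (le_refl 2) this.symm ▸ rfl

include h0 hc hd in
lemma final_statement :
    ∃ W₁ W₂ : Submodule (ZMod 2) (Fin v → ZMod 2),
      finrank (ZMod 2) ↥W₁ = 3 ∧ finrank (ZMod 2) ↥W₂ = 3 ∧ W₁ ⊓ W₂ = ⊥ ∧
      (S : Set (Fin v → ZMod 2)) = {x | x ≠ 0 ∧ (x ∈ W₁ ∨ x ∈ W₂)} := by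
  classical
  have hSne : S.Nonempty := Finset.card_pos.mp (by rw [hc]; norm_num)
  obtain ⟨p, hp⟩ := hSne
  have hPpsub := Pfin_subset (S := S) p hp
  have hPpcard := Pfin_card h0 hc hd p hp
  have hsd : (S \ Pfin S p).Nonempty := by
    rw [← Finset.card_pos, Finset.card_sdiff_of_subset hPpsub, hc, hPpcard]
    norm_num
  obtain ⟨q, hq⟩ := hsd
  have hqS : q ∈ S := (Finset.mem_sdiff.mp hq).1
  have hqPp : q ∉ Pfin S p := (Finset.mem_sdiff.mp hq).2
  have hPqsub := Pfin_subset (S := S) q hqS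
  have hPqcard := Pfin_card h0 hc hd q hqS
  have hdisj : ∀ x, x ∈ Pfin S p → x ∈ Pfin S q → False := by
    intro x hx1 hx2
    have e1 := plane_determined h0 hc hd p hp x hx1
    have e2 := plane_determined h0 hc hd q hqS x hx2
    exact hqPp (e1 ▸ e2.symm ▸ Finset.mem_insert_self q (Np S q))
  have hPq : Pfin S q = S \ Pfin S p := by
    apply Finset.eq_of_subset_of_card_le
    · intro z hz
      exact Finset.mem_sdiff.mpr ⟨hPqsub hz, fun h => hdisj z h hz⟩
    · rw [Finset.card_sdiff_of_subset hPpsub, hc, hPpcard, hPqcard]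
  have hcover : ∀ x ∈ S, x ∈ Pfin S p ∨ x ∈ Pfin S q := by
    intro x hx
    by_cases h : x ∈ Pfin S p
    · exact Or.inl h
    · exact Or.inr (hPq ▸ Finset.mem_sdiff.mpr ⟨hx, h⟩)
  have hz1 : (0 : Fin v → ZMod 2) ∈ Gfin S p := Finset.mem_insert_self 0 _
  have hz2 : (0 : Fin v → ZMod 2) ∈ Gfin S q := Finset.mem_insert_self 0 _
  have hadd1 := Gfin_add h0 hc hd p hp
  have hadd2 := Gfin_add h0 hc hd q hqS
  refine ⟨mkSub (Gfin S p) hz1 hadd1, mkSub (Gfin S q) hz2 hadd2, ?_, ?_, ?_, ?_⟩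
  · apply finrank_mkSub
    rw [Gfin, Finset.card_insert_of_notMem (zero_not_Pfin h0 p hp), hPpcard]
  · apply finrank_mkSub
    rw [Gfin, Finset.card_insert_of_notMem (zero_not_Pfin h0 q hqS), hPqcard]
  · rw [eq_bot_iff]
    intro x hx
    rw [Submodule.mem_inf] at hx
    obtain ⟨hx1, hx2⟩ := hx
    rw [mem_mkSub] at hx1 hx2
    rw [Submodule.mem_bot]
    rcases Finset.mem_insert.mp hx1 with h | h
    · exact h
    · rcases Finset.mem_insert.mp hx2 with h' | h'
      · exact h'
      · exact absurd (hdisj x h h') (fun f => f)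
  · ext x
    simp only [Finset.coe_sort_coe, Set.mem_setOf_eq, Finset.mem_coe]
    constructor
    · intro hx
      refine ⟨h0 x hx, ?_⟩
      rcases hcover x hx with h | h
      · exact Or.inl (mem_mkSub.mpr (Finset.mem_insert_of_mem h))
      · exact Or.inr (mem_mkSub.mpr (Finset.mem_insert_of_mem h))
    · rintro ⟨hx0, hx | hx⟩
      · rw [mem_mkSub] at hx
        rcases Finset.mem_insert.mp hx with h | h
        · exact absurd h hx0
        · exact hPpsub h
      · rw [mem_mkSub] at hx
        rcases Finset.mem_insert.mp hx with h | h
        · exact absurd h hx0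
        · exact hPqsub h

end Main

end TwoPlanesAux

/-- Every 4-divisible set of exactly 14 points in PG(v-1,2) is the disjoint
union of the point sets of two disjoint planes. -/
theorem four_divisible_card_fourteen_two_planes (v : ℕ)
    (S : Finset (Fin v → ZMod 2)) (h0 : ∀ x ∈ S, x ≠ 0)
    (hdiv : ∀ φ : (Fin v → ZMod 2) →ₗ[ZMod 2] ZMod 2, φ ≠ 0 →
      4 ∣ (S.filter (fun x => φ x ≠ 0)).card)
    (hcard : S.card = 14) :
    ∃ W₁ W₂ : Submodule (ZMod 2) (Fin v → ZMod 2),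
      finrank (ZMod 2) ↥W₁ = 3 ∧ finrank (ZMod 2) ↥W₂ = 3 ∧ W₁ ⊓ W₂ = ⊥ ∧
      (S : Set (Fin v → ZMod 2)) = {x | x ≠ 0 ∧ (x ∈ W₁ ∨ x ∈ W₂)} := by
  classical
  have hd : ∀ y : Fin v → ZMod 2, y ≠ 0 → 4 ∣ TwoPlanesAux.wt S y := by
    intro y hy
    set φ : (Fin v → ZMod 2) →ₗ[ZMod 2] ZMod 2 :=
      { toFun := fun x => dotProduct x y
        map_add' := fun a b => add_dotProduct a b y
        map_smul' := fun c a => by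
          simp [smul_dotProduct] } with hφ
    have hφne : φ ≠ 0 := by
      obtain ⟨i, hi⟩ := Function.ne_iff.mp hy
      intro h
      have := LinearMap.congr_fun h (Pi.single i 1)
      rw [hφ] at this
      simp only [LinearMap.coe_mk, AddHom.coe_mk, LinearMap.zero_apply] at this
      rw [single_dotProduct, one_mul] at this
      exact hi (by simpa using this)
    have hdvd := hdiv φ hφne
    have hfe : S.filter (fun x => φ x ≠ 0) = S.filter (fun x => dotProduct x y = 1) := by
      apply Finset.filter_congr
      intro x _
      rw [hφ]
      simp only [LinearMap.coe_mk, AddHom.coe_mk]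
      constructor
      · intro h; exact TwoPlanesAux.z2ne0 _ h
      · intro h h'; rw [h] at h'; exact TwoPlanesAux.z01 h'.symm
    rw [hfe] at hdvd
    exact hdvd
  exact TwoPlanesAux.final_statement h0 hcard hd
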